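/- Let ℓ be a prime congruent to 1 or 19 modulo 30. Then the natural number n = (5ℓ² − 845)/120 is a non-negative integer for ℓ > 13, and this n is not represented by p₁₇(x) + p₁₇(y) + 3·p₁₇(z) for any integers x, y, z. -/

import Mathlib

/-- The generalized 17-gonal number `p₁₇(x) = (15x² - 13x)/2` (exact division). -/
def p17 (x : ℤ) : ℤ := (15 * x ^ 2 - 13 * x) / 2

private instance fact2 : Fact (Nat.Prime 2) := ⟨Nat.prime_two⟩
private instance fact3 : Fact (Nat.Prime 3) := ⟨by norm_num⟩
private instance fact5 : Fact (Nat.Prime 5) := ⟨by norm_num⟩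


lemma two_mul_p17 (x : ℤ) : 2 * p17 x = 15 * x ^ 2 - 13 * x := by
  rcases Int.even_or_odd x with ⟨m, rfl⟩ | ⟨m, rfl⟩
  · unfold p17
    rw [show 15 * (m + m) ^ 2 - 13 * (m + m) = 2 * (30 * m ^ 2 - 13 * m) by ring,
      Int.mul_ediv_cancel_left _ (by norm_num)]
  · unfold p17
    rw [show 15 * (2 * m + 1) ^ 2 - 13 * (2 * m + 1) = 2 * (30 * m ^ 2 + 17 * m + 1) by ring,
      Int.mul_ediv_cancel_left _ (by norm_num)]

lemma jac15 (a : ℤ) : jacobiSym a 15 = legendreSym 3 a * legendreSym 5 a := by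
  rw [show (15 : ℕ) = 3 * 5 from rfl, jacobiSym.mul_right' _ (by norm_num) (by norm_num),
    ← jacobiSym.legendreSym.to_jacobiSym, ← jacobiSym.legendreSym.to_jacobiSym]

lemma jac_2_15 : jacobiSym 2 15 = 1 := by
  rw [jac15, (legendreSym.eq_neg_one_iff 3 (a := 2)).mpr (by decide),
    (legendreSym.eq_neg_one_iff 5 (a := 2)).mpr (by decide)]
  norm_num

lemma jac_neg15_2 : jacobiSym (-15) 2 = 1 := by
  rw [← jacobiSym.legendreSym.to_jacobiSym,
    (legendreSym.eq_one_iff 2 (a := (-15 : ℤ)) (by decide)).mpr (by decide)]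

/-- For odd `k`, `J(-15 | k) = J(k | 15)`. -/
lemma neg15_odd (k : ℕ) (hk : Odd k) : jacobiSym (-15) k = jacobiSym (k : ℤ) 15 := by
  have h1 : jacobiSym (-15) k = jacobiSym (-1) k * jacobiSym 15 k := by
    rw [show (-15 : ℤ) = -1 * 15 by norm_num, jacobiSym.mul_left]
  have h2 : jacobiSym ((15 : ℕ) : ℤ) k = (-1) ^ (15 / 2 * (k / 2)) * jacobiSym (k : ℤ) 15 :=
    jacobiSym.quadratic_reciprocity ⟨7, by norm_num⟩ hk
  have h3 : jacobiSym (-1) k = (-1 : ℤ) ^ (k / 2) := by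
    rw [jacobiSym.at_neg_one hk, ZMod.χ₄_eq_neg_one_pow (Nat.odd_iff.mp hk)]
  simp only [Nat.cast_ofNat] at h2
  rw [h1, h3, h2]
  rw [show (15 / 2 : ℕ) = 7 from rfl, ← mul_assoc, ← pow_add]
  rw [show k / 2 + 7 * (k / 2) = 2 * (4 * (k / 2)) by ring, pow_mul]
  norm_num

/-- `J(-15 | k) = J(k | 15)` for every positive `k`. -/
lemma neg15_eq (k : ℕ) (hk : k ≠ 0) : jacobiSym (-15) k = jacobiSym (k : ℤ) 15 := by
  obtain ⟨e, m, hm, rfl⟩ := Nat.exists_eq_two_pow_mul_odd hk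
  have hm0 : m ≠ 0 := by rintro rfl; simp at hm
  rw [jacobiSym.mul_right' _ (by positivity) hm0, jacobiSym.pow_right,
    jac_neg15_2, one_pow, one_mul, neg15_odd m hm]
  rw [Nat.cast_mul, jacobiSym.mul_left, Nat.cast_pow, jacobiSym.pow_left,
    show ((2:ℕ):ℤ) = (2:ℤ) from rfl, jac_2_15, one_pow, one_mul]



lemma jac_11_15 : jacobiSym 11 15 = -1 := by
  rw [jac15, (legendreSym.eq_neg_one_iff 3 (a := 11)).mpr (by decide),
    (legendreSym.eq_one_iff 5 (a := (11:ℤ)) (by decide)).mpr (by decide)]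
  norm_num

lemma jac_14_15 : jacobiSym 14 15 = -1 := by
  rw [jac15, (legendreSym.eq_neg_one_iff 3 (a := 14)).mpr (by decide),
    (legendreSym.eq_one_iff 5 (a := (14:ℤ)) (by decide)).mpr (by decide)]
  norm_num

lemma jac_1_15 : jacobiSym 1 15 = 1 := jacobiSym.one_left 15

lemma jac_4_15 : jacobiSym 4 15 = 1 := by
  rw [jac15, (legendreSym.eq_one_iff 3 (a := (4:ℤ)) (by decide)).mpr (by decide),
    (legendreSym.eq_one_iff 5 (a := (4:ℤ)) (by decide)).mpr (by decide)]
  norm_num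

/-- From `J(-15 | m) = -1`, extract a prime `p` dividing `m` to an odd power
with `J(-15 | p) = -1`. -/
lemma exists_bad_prime : ∀ m : ℕ, jacobiSym (-15) m = -1 →
    ∃ p e : ℕ, p.Prime ∧ Odd e ∧ p ^ e ∣ m ∧ ¬ p ^ (e + 1) ∣ m ∧ jacobiSym (-15) p = -1 := by
  intro m
  induction m using Nat.strong_induction_on with
  | _ m IH =>
    intro hm
    have hm0 : m ≠ 0 := by rintro rfl; rw [jacobiSym.zero_right] at hm; norm_num at hm
    have hm1 : m ≠ 1 := by rintro rfl; rw [jacobiSym.one_right] at hm; norm_num at hm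
    set p := m.minFac with hp_def
    have hp : p.Prime := Nat.minFac_prime hm1
    obtain ⟨e, m', hpm', hm'⟩ := Nat.exists_eq_pow_mul_and_not_dvd hm0 p hp.ne_one
    have he1 : 1 ≤ e := by
      by_contra h
      push_neg at h
      interval_cases e
      · rw [pow_zero, one_mul] at hm'
        exact hpm' (hm' ▸ m.minFac_dvd)
    have hm'0 : m' ≠ 0 := by rintro rfl; simp at hm'; exact hm0 hm'
    have hmlt : m' < m := by
      calc m' < p ^ e * m' := by
            nlinarith [Nat.one_lt_pow (n := e) (by omega) hp.two_le, Nat.pos_of_ne_zero hm'0]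
        _ = m := hm'.symm
    have hsplit : jacobiSym (-15) m = jacobiSym (-15) p ^ e * jacobiSym (-15) m' := by
      rw [hm', jacobiSym.mul_right' _ (pow_ne_zero e hp.pos.ne') hm'0, jacobiSym.pow_right]
    -- helper to lift a result on m' to m
    have lift : jacobiSym (-15) m' = -1 →
        ∃ p e : ℕ, p.Prime ∧ Odd e ∧ p ^ e ∣ m ∧ ¬ p ^ (e + 1) ∣ m ∧ jacobiSym (-15) p = -1 := by
      intro h'
      obtain ⟨q, f, hq, hf, hqf, hqf1, hjq⟩ := IH m' hmlt h'
      have hqm' : q ∣ m' := dvd_trans (dvd_pow_self q hf.pos.ne') hqf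
      have hqp : q ≠ p := by rintro rfl; exact hpm' hqm'
      have hcop : Nat.Coprime (q ^ (f + 1)) (p ^ e) :=
        Nat.Coprime.pow _ _ ((Nat.coprime_primes hq hp).mpr hqp)
      refine ⟨q, f, hq, hf, dvd_trans hqf (hm' ▸ dvd_mul_left m' (p ^ e)), ?_, hjq⟩
      intro hdvd
      rw [hm'] at hdvd
      exact hqf1 (hcop.dvd_of_dvd_mul_left hdvd)
    rcases jacobiSym.trichotomy (-15) p with h0 | h1 | hneg
    · rw [hsplit, h0, zero_pow (by omega), zero_mul] at hm; norm_num at hm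
    · rw [hsplit, h1, one_pow, one_mul] at hm
      exact lift hm
    · rcases Nat.even_or_odd e with hev | hodd
      · rw [hsplit, hneg, hev.neg_one_pow, one_mul] at hm
        exact lift hm
      · refine ⟨p, e, hp, hodd, hm' ▸ dvd_mul_right (p ^ e) m', ?_, hneg⟩
        intro hdvd
        rw [hm', pow_succ] at hdvd
        exact hpm' ((mul_dvd_mul_iff_left (pow_ne_zero e hp.pos.ne' : (p:ℕ) ^ e ≠ 0)).mp hdvd)



/-- If `p ∣ 2c² + cd + 2d²` then either `p` divides both `c` and `d`,
or `-15` is a square mod `p`. -/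
lemma direct_step (p : ℕ) [hp : Fact p.Prime] (hp2 : p ≠ 2) (c d : ℤ)
    (hdvd : (p : ℤ) ∣ 2 * c ^ 2 + c * d + 2 * d ^ 2) :
    ((p : ℤ) ∣ c ∧ (p : ℤ) ∣ d) ∨ IsSquare (-15 : ZMod p) := by
  have h0 : ((2 * c ^ 2 + c * d + 2 * d ^ 2 : ℤ) : ZMod p) = 0 :=
    (ZMod.intCast_zmod_eq_zero_iff_dvd _ p).mpr hdvd
  push_cast at h0
  set C : ZMod p := (c : ZMod p) with hC
  set D : ZMod p := (d : ZMod p) with hD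
  have key : (4 * C + D) ^ 2 = -15 * D ^ 2 := by linear_combination 8 * h0
  by_cases hd : D = 0
  · left
    have h4 : (4 : ZMod p) ≠ 0 := by
      intro h4
      have hdvd4 : p ∣ 4 := (ZMod.natCast_eq_zero_iff 4 p).mp (by exact_mod_cast h4)
      have h22 : p ∣ 2 ^ 2 := (show (2:ℕ) ^ 2 = 4 by norm_num) ▸ hdvd4
      have : p ∣ 2 := hp.out.dvd_of_dvd_pow h22
      exact hp2 ((Nat.prime_dvd_prime_iff_eq hp.out Nat.prime_two).mp this)
    have hsq : (4 * C + D) ^ 2 = 0 := by rw [key, hd]; ring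
    have h40 : 4 * C + D = 0 := pow_eq_zero_iff (n := 2) (by norm_num) |>.mp hsq
    have hC0 : C = 0 := by
      rw [hd, add_zero] at h40
      rcases mul_eq_zero.mp h40 with h | h
      · exact absurd h h4
      · exact h
    exact ⟨(ZMod.intCast_zmod_eq_zero_iff_dvd c p).mp hC0,
      (ZMod.intCast_zmod_eq_zero_iff_dvd d p).mp hd⟩
  · right
    refine ⟨(4 * C + D) * D⁻¹, ?_⟩
    have hinv : D * D⁻¹ = 1 := mul_inv_cancel₀ hd
    calc (-15 : ZMod p) = -15 * (D * D⁻¹) ^ 2 := by rw [hinv]; ring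
      _ = (4 * C + D) ^ 2 * D⁻¹ ^ 2 := by linear_combination (-(D⁻¹ ^ 2)) * key
      _ = (4 * C + D) * D⁻¹ * ((4 * C + D) * D⁻¹) := by ring

/-- Descent: if `2c² + cd + 2d² = p^(2f+1) h` with `p ∤ h`, then `-15` is a square mod `p`. -/
lemma descend (p : ℕ) [hp : Fact p.Prime] (hp2 : p ≠ 2) :
    ∀ f : ℕ, ∀ c d h : ℤ, ¬ (p : ℤ) ∣ h →
      2 * c ^ 2 + c * d + 2 * d ^ 2 = (p : ℤ) ^ (2 * f + 1) * h →
      IsSquare (-15 : ZMod p) := by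
  intro f
  induction f with
  | zero =>
    intro c d h hh heq
    have hdvd : (p : ℤ) ∣ 2 * c ^ 2 + c * d + 2 * d ^ 2 :=
      ⟨(p : ℤ) ^ (2 * 0) * h, by rw [heq]; ring⟩
    rcases direct_step p hp2 c d hdvd with ⟨⟨c', rfl⟩, ⟨d', rfl⟩⟩ | hsq
    · exfalso
      apply hh
      have hp0 : (p : ℤ) ≠ 0 := Int.natCast_ne_zero.mpr hp.out.pos.ne'
      have hthis : (p : ℤ) * ((p : ℤ) * (2 * c' ^ 2 + c' * d' + 2 * d' ^ 2)) = (p : ℤ) * h := by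
        linear_combination heq
      exact ⟨_, (mul_left_cancel₀ hp0 hthis).symm⟩
    · exact hsq
  | succ f IH =>
    intro c d h hh heq
    have hdvd : (p : ℤ) ∣ 2 * c ^ 2 + c * d + 2 * d ^ 2 :=
      ⟨(p : ℤ) ^ (2 * f + 2) * h, by rw [heq]; ring⟩
    rcases direct_step p hp2 c d hdvd with ⟨⟨c', rfl⟩, ⟨d', rfl⟩⟩ | hsq
    · apply IH c' d' h hh
      have hp0 : ((p : ℤ) ^ 2) ≠ 0 := pow_ne_zero 2 (Int.natCast_ne_zero.mpr hp.out.pos.ne')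
      apply mul_left_cancel₀ hp0
      calc (p:ℤ)^2 * (2 * c' ^ 2 + c' * d' + 2 * d' ^ 2)
          = 2 * ((p:ℤ)*c') ^ 2 + ((p:ℤ)*c') * ((p:ℤ)*d') + 2 * ((p:ℤ)*d') ^ 2 := by ring
        _ = (p : ℤ) ^ (2 * (f+1) + 1) * h := heq
        _ = (p:ℤ)^2 * ((p : ℤ) ^ (2 * f + 1) * h) := by ring
    · exact hsq

private lemma leg2 : legendreSym 2 (-15) = 1 := (legendreSym.eq_one_iff 2 (by decide)).mpr (by decide)
private lemma leg3 : legendreSym 3 (-15) = 0 := (legendreSym.eq_zero_iff 3 (-15)).mpr (by decide)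
private lemma leg5 : legendreSym 5 (-15) = 0 := (legendreSym.eq_zero_iff 5 (-15)).mpr (by decide)


set_option maxHeartbeats 1000000 in
/-- For a prime `ℓ ≡ 1, 19 (mod 30)` with `ℓ > 13`, the natural number
`n = (5ℓ² - 845)/120` exists and is not represented by `p₁₇(x) + p₁₇(y) + 3p₁₇(z)`. -/
theorem not_almost_universal_17 (ℓ : ℕ) (hℓ : ℓ.Prime)
    (hmod : ℓ % 30 = 1 ∨ ℓ % 30 = 19) (hgt : 13 < ℓ) :
    ∃ n : ℕ, 120 * (n : ℤ) + 845 = 5 * (ℓ : ℤ) ^ 2 ∧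
      ∀ x y z : ℤ, (n : ℤ) ≠ p17 x + p17 y + 3 * p17 z := by
  obtain ⟨N, hN, hN0⟩ : ∃ N : ℤ, 120 * N + 845 = 5 * (ℓ : ℤ) ^ 2 ∧ 0 ≤ N := by
    have hq : ℓ = 30 * (ℓ / 30) + ℓ % 30 := (Nat.div_add_mod ℓ 30).symm.trans (by ring)
    rcases Nat.even_or_odd (ℓ / 30) with ⟨s, hs⟩ | ⟨s, hs⟩ <;> rcases hmod with h1 | h1
    · have hl : (ℓ : ℤ) = 60 * s + 1 := by omega
      have hs1 : 1 ≤ (s : ℤ) := by omega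
      exact ⟨150 * s ^ 2 + 5 * s - 7, by rw [hl]; ring, by nlinarith⟩
    · have hl : (ℓ : ℤ) = 60 * s + 19 := by omega
      exact ⟨150 * s ^ 2 + 95 * s + 8, by rw [hl]; ring, by positivity⟩
    · have hl : (ℓ : ℤ) = 60 * s + 31 := by omega
      exact ⟨150 * s ^ 2 + 155 * s + 33, by rw [hl]; ring, by positivity⟩
    · have hl : (ℓ : ℤ) = 60 * s + 49 := by omega
      exact ⟨150 * s ^ 2 + 245 * s + 93, by rw [hl]; ring, by positivity⟩
  refine ⟨N.toNat, by rw [Int.toNat_of_nonneg hN0]; exact hN, ?_⟩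
  intro x y z hxyz
  rw [Int.toNat_of_nonneg hN0] at hxyz
  -- the three squares
  have key : 5 * (ℓ : ℤ) ^ 2
      = (30*x-13)^2 + (30*y-13)^2 + 3*(30*z-13)^2 := by
    have h2x := two_mul_p17 x
    have h2y := two_mul_p17 y
    have h2z := two_mul_p17 z
    linear_combination -hN + 120 * hxyz + 60 * h2x + 60 * h2y + 180 * h2z
  set A : ℤ := 6*x+6*y+18*z-13 with hA
  set c : ℤ := z - x with hc
  set d : ℤ := y - z with hd
  set g : ℤ := 2*c^2 + c*d + 2*d^2 with hg
  have hmain : (ℓ : ℤ) ^ 2 = A ^ 2 + 72 * g := by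
    have h5 : 5 * ((ℓ : ℤ) ^ 2) = 5 * (A ^ 2 + 72 * g) := by
      rw [hA, hg, hc, hd]; linear_combination key
    linarith
  -- basic congruences
  have hl5 : ℓ % 5 = 1 ∨ ℓ % 5 = 4 := by omega
  -- 5 ∣ A
  have h5A : (5 : ℤ) ∣ A := by
    have hdec : ∀ X Y Z L : ZMod 5, L ^ 2 = 1 →
        L ^ 2 = (6*X+6*Y+18*Z-13)^2 + 72*(2*(Z-X)^2+(Z-X)*(Y-Z)+2*(Y-Z)^2) →
        6*X+6*Y+18*Z-13 = 0 := by decide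
    have hL : ((ℓ : ℤ) : ZMod 5) ^ 2 = 1 := by
      have hmod5 : ((ℓ % 5 : ℕ) : ZMod 5) = ((ℓ : ℕ) : ZMod 5) := ZMod.natCast_mod ℓ 5
      rcases hl5 with h | h <;> rw [h] at hmod5 <;>
        · push_cast at hmod5 ⊢
          rw [← hmod5]
          decide
    have hmain' : (ℓ : ℤ)^2 = (6*x+6*y+18*z-13)^2
        + 72*(2*(z-x)^2+(z-x)*(y-z)+2*(y-z)^2) := by
      rw [hmain, hA, hg, hc, hd]
    have hcast := congrArg (fun t : ℤ => (t : ZMod 5)) hmain'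
    push_cast at hcast
    have h0 := hdec (x : ZMod 5) (y : ZMod 5) (z : ZMod 5) ((ℓ : ℤ) : ZMod 5) hL
      (by have h := congrArg (fun t : ℤ => (t : ZMod 5)) hmain'; simp only [Int.cast_add, Int.cast_sub, Int.cast_mul, Int.cast_pow, Int.cast_ofNat] at h; exact h)
    have h0' : ((6*x+6*y+18*z-13 : ℤ) : ZMod 5) = 0 := by simp only [Int.cast_add, Int.cast_sub, Int.cast_mul, Int.cast_ofNat]; exact h0
    rw [hA]
    exact_mod_cast (ZMod.intCast_zmod_eq_zero_iff_dvd _ 5).mp h0'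
  -- g > 0
  have hgnn : 0 ≤ g := by rw [hg]; nlinarith [sq_nonneg (4*c+d), sq_nonneg d]
  have hgne : g ≠ 0 := by
    intro h0
    have h8 : (4*c+d)^2 + 15*d^2 = 0 := by rw [hg] at h0; linear_combination 8 * h0
    have hd0 : d = 0 := by nlinarith [sq_nonneg (4*c+d), sq_nonneg d]
    have hc0 : c = 0 := by nlinarith [sq_nonneg (4*c+d)]
    have hAl : (ℓ:ℤ)^2 = A^2 := by rw [hmain, hg, hc0, hd0]; ring
    have : (A - ℓ) * (A + ℓ) = 0 := by linear_combination -hAl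
    rcases mul_eq_zero.mp this with h | h
    · have : A = (ℓ:ℤ) := by linarith
      rw [this] at h5A
      have : (5:ℤ) ∣ (ℓ:ℕ) := h5A
      have h5n : (5:ℕ) ∣ ℓ := by exact_mod_cast this
      omega
    · have : A = -(ℓ:ℤ) := by linarith
      rw [this] at h5A
      have h5n : (5:ℕ) ∣ ℓ := by
        have : (5:ℤ) ∣ (ℓ:ℤ) := (dvd_neg.mp h5A)
        exact_mod_cast this
      omega
  have hgpos : 0 < g := lt_of_le_of_ne hgnn (Ne.symm hgne)
  -- P and Q
  set P : ℤ := (ℓ : ℤ) - A with hP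
  set Q : ℤ := (ℓ : ℤ) + A with hQ
  have hPQ : P * Q = 72 * g := by rw [hP, hQ]; linear_combination hmain
  have hsum : P + Q = 2 * (ℓ : ℤ) := by rw [hP, hQ]; ring
  have hlpos : 0 < (ℓ:ℤ) := by positivity
  have hPQpos : 0 < P * Q := by rw [hPQ]; linarith
  have hPpos : 0 < P := by
    rcases mul_pos_iff.mp hPQpos with ⟨h1, _⟩ | ⟨h1, h2⟩
    · exact h1
    · exfalso; linarith
  have hQpos : 0 < Q := by
    rcases mul_pos_iff.mp hPQpos with ⟨_, h2⟩ | ⟨h1, h2⟩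
    · exact h2
    · exfalso; linarith
  -- P mod 15
  have hA3 : A % 3 = 2 := by omega
  have hl3 : (ℓ:ℤ) % 3 = 1 := by omega
  have hl5' : (ℓ:ℤ) % 5 = 1 ∨ (ℓ:ℤ) % 5 = 4 := by omega
  have hP15 : P % 15 = 11 ∨ P % 15 = 14 := by omega
  -- Jacobi symbol of P
  have hPnat : ((P.toNat : ℕ) : ℤ) = P := Int.toNat_of_nonneg hPpos.le
  have hJP : jacobiSym (-15) P.toNat = -1 := by
    rw [neg15_eq P.toNat (by omega), hPnat, jacobiSym.mod_left]
    have hcast15 : P % ((15:ℕ):ℤ) = P % 15 := by norm_num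
    rw [hcast15]
    rcases hP15 with h | h <;> rw [h]
    · exact jac_11_15
    · exact jac_14_15
  obtain ⟨p, e, hp, he, hpe, hpe1, hjp⟩ := exists_bad_prime P.toNat hJP
  haveI hpf : Fact p.Prime := ⟨hp⟩
  -- p ≠ 2, 3, 5, ℓ
  have hp2 : p ≠ 2 := by
    rintro rfl
    rw [← jacobiSym.legendreSym.to_jacobiSym, leg2] at hjp
    norm_num at hjp
  have hp3 : p ≠ 3 := by
    rintro rfl
    rw [← jacobiSym.legendreSym.to_jacobiSym, leg3] at hjp
    norm_num at hjp
  have hp5 : p ≠ 5 := by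
    rintro rfl
    rw [← jacobiSym.legendreSym.to_jacobiSym, leg5] at hjp
    norm_num at hjp
  have hpl : p ≠ ℓ := by
    intro hpeq
    have hl15 : (ℓ:ℤ) % 15 = 1 ∨ (ℓ:ℤ) % 15 = 4 := by omega
    have hJl : jacobiSym (-15) ℓ = 1 := by
      rw [neg15_eq ℓ (by omega), jacobiSym.mod_left]
      have hcastl : ((ℓ:ℕ):ℤ) % ((15:ℕ):ℤ) = (ℓ:ℤ) % 15 := by norm_num
      rw [hcastl]
      rcases hl15 with h | h <;> rw [h]
      · exact jacobiSym.one_left 15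
      · exact jac_4_15
    rw [hpeq, hJl] at hjp
    norm_num at hjp
  -- divisibility transfer
  have hpeP : ((p:ℤ)) ^ e ∣ P := by
    rw [← hPnat]
    exact_mod_cast Int.natCast_dvd_natCast.mpr hpe
  have hpP : (p:ℤ) ∣ P := dvd_trans (dvd_pow_self _ he.pos.ne') hpeP
  have hpprime : Prime (p : ℤ) := Int.prime_iff_natAbs_prime.mpr (by simpa using hp)
  have hpQ : ¬ (p:ℤ) ∣ Q := by
    intro hq
    have h2l : (p:ℤ) ∣ 2 * (ℓ:ℤ) := hsum ▸ dvd_add hpP hq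
    have : p ∣ 2 * ℓ := by exact_mod_cast h2l
    rcases (Nat.Prime.dvd_mul hp).mp this with h | h
    · exact hp2 ((Nat.prime_dvd_prime_iff_eq hp Nat.prime_two).mp h)
    · exact hpl ((Nat.prime_dvd_prime_iff_eq hp hℓ).mp h)
  have hp72 : ¬ (p:ℤ) ∣ 72 := by
    intro h72
    have h72' : p ∣ 72 := by exact_mod_cast h72
    have h89 : p ∣ 8 * 9 := by norm_num; exact h72'
    rcases (Nat.Prime.dvd_mul hp).mp h89 with h | h
    · exact hp2 ((Nat.prime_dvd_prime_iff_eq hp Nat.prime_two).mp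
        (hp.dvd_of_dvd_pow (show p ∣ 2 ^ 3 by norm_num; exact h)))
    · exact hp3 ((Nat.prime_dvd_prime_iff_eq hp Nat.prime_three).mp
        (hp.dvd_of_dvd_pow (show p ∣ 3 ^ 2 by norm_num; exact h)))
  have hpeg : (p:ℤ) ^ e ∣ g := by
    have h1 : (p:ℤ) ^ e ∣ 72 * g := hPQ ▸ Dvd.dvd.mul_right hpeP Q
    exact hpprime.pow_dvd_of_dvd_mul_left e hp72 h1
  obtain ⟨h, hh⟩ := hpeg
  have hph : ¬ (p:ℤ) ∣ h := by
    intro hdh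
    have he1 : (p:ℤ) ^ (e+1) ∣ g := by
      obtain ⟨h', rfl⟩ := hdh
      exact ⟨h', by rw [hh]; ring⟩
    have hPQdvd : (p:ℤ) ^ (e+1) ∣ P * Q := by
      rw [hPQ]; exact Dvd.dvd.mul_left he1 72
    have : (p:ℤ) ^ (e+1) ∣ P := hpprime.pow_dvd_of_dvd_mul_right (e+1) hpQ hPQdvd
    apply hpe1
    have : ((p:ℕ):ℤ) ^ (e+1) ∣ ((P.toNat : ℕ) : ℤ) := by rw [hPnat]; exact this
    exact_mod_cast this
  obtain ⟨f, hf⟩ := he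
  have hsq : IsSquare (-15 : ZMod p) := by
    apply descend p hp2 f c d h hph
    rw [← hg, ← hf, ← hh]
  rw [← jacobiSym.legendreSym.to_jacobiSym] at hjp
  have hne : ((-15 : ℤ) : ZMod p) ≠ 0 := by
    intro h0
    have : (p:ℤ) ∣ (-15 : ℤ) := (ZMod.intCast_zmod_eq_zero_iff_dvd _ p).mp h0
    have : (p:ℤ) ∣ (15 : ℤ) := (dvd_neg.mp this)
    have h15 : p ∣ 15 := by exact_mod_cast this
    have h35 : p ∣ 3 * 5 := by norm_num; exact h15
    rcases (Nat.Prime.dvd_mul hp).mp h35 with h | h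
    · exact hp3 ((Nat.prime_dvd_prime_iff_eq hp Nat.prime_three).mp h)
    · exact hp5 ((Nat.prime_dvd_prime_iff_eq hp (by norm_num)).mp h)
  have hsq' : IsSquare (((-15 : ℤ)) : ZMod p) := by
    have : (((-15 : ℤ)) : ZMod p) = (-15 : ZMod p) := by push_cast; ring
    rw [this]; exact hsq
  rw [(legendreSym.eq_one_iff p hne).mpr hsq'] at hjp
  norm_num at hjp
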